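/- Let Q ∈ M_{M×N}(ℂ) have all entries of modulus 1 and let H = F_M ⊗_Q F_N be the deformed Fourier matrix, H_{(i,a),(j,b)} = Q_{ib} w^{ij} z^{ab} with w = e^{2πi/M}, z = e^{2πi/N}. For x ∈ ℤ/Mℤ define R^x ∈ M_{N²}(ℂ) by R^x_{ab,cd} = (1/M)·Σ_{m∈ℤ/Mℤ} w^{mx}·Q_{ma}Q_{md}·conj(Q_{mc}Q_{mb}). Then the profile matrix of H is given by Q^H_{(i,a)(j,b),(k,c)(l,d)} = δ_{a−b, c−d} · R^{i+l−k−j}_{ab,cd}, where a−b and c−d are computed in ℤ/Nℤ and i+l−k−j in ℤ/Mℤ. -/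

import Mathlib

open Matrix BigOperators ComplexConjugate

/-- The profile matrix of `H`: `Q^H_{ab,cd} = (1/n)·∑_i H_{ia}·H_{id}·conj(H_{ib}·H_{ic})`. -/
noncomputable def profile {I : Type*} [Fintype I] (H : Matrix I I ℂ) (a b c d : I) : ℂ :=
  (Fintype.card I : ℂ)⁻¹ * ∑ i, H i a * H i d * conj (H i b * H i c)

/-- The deformed Fourier matrix (Diţă deformation) `F_M ⊗_Q F_N`, with entries
`H_{(i,a),(j,b)} = Q_{ib}·w^{ij}·z^{ab}`, `w = e^{2πi/M}`, `z = e^{2πi/N}`. -/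
noncomputable def defFourier (M N : ℕ) (Q : Matrix (ZMod M) (ZMod N) ℂ) :
    Matrix (ZMod M × ZMod N) (ZMod M × ZMod N) ℂ :=
  fun p q => Q p.1 q.2 *
    Complex.exp (2 * Real.pi * Complex.I * ((p.1.val : ℂ) * (q.1.val : ℂ)) / M) *
    Complex.exp (2 * Real.pi * Complex.I * ((p.2.val : ℂ) * (q.2.val : ℂ)) / N)

/-- For `x ∈ ℤ/Mℤ`, the matrix `R^x ∈ M_{N²}(ℂ)` with entries
`R^x_{ab,cd} = (1/M)·∑_m w^{mx}·Q_{ma}·Q_{md}·conj(Q_{mc}·Q_{mb})`, `w = e^{2πi/M}`. -/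
noncomputable def Rmat (M N : ℕ) [NeZero M] (Q : Matrix (ZMod M) (ZMod N) ℂ)
    (x : ZMod M) (a b c d : ZMod N) : ℂ :=
  (M : ℂ)⁻¹ * ∑ m : ZMod M,
    Complex.exp (2 * Real.pi * Complex.I * ((m.val : ℂ) * (x.val : ℂ)) / M) *
      Q m a * Q m d * conj (Q m c * Q m b)

lemma exp_eq_char (n : ℕ) [NeZero n] (m x : ZMod n) :
    Complex.exp (2 * Real.pi * Complex.I * ((m.val : ℂ) * (x.val : ℂ)) / n)
      = ZMod.stdAddChar (m * x) := by
  have h : ((m.val * x.val : ℤ) : ZMod n) = m * x := by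
    push_cast
    simp [ZMod.natCast_zmod_val]
  rw [← h, ZMod.stdAddChar_coe]
  push_cast
  ring_nf

lemma conj_char (n : ℕ) [NeZero n] (t : ZMod n) :
    conj ((ZMod.stdAddChar t : ℂ)) = ZMod.stdAddChar (-t) := by
  rw [ZMod.stdAddChar_apply, ZMod.stdAddChar_apply, AddChar.map_neg_eq_inv,
    Circle.coe_inv_eq_conj]

/-- the profile matrix of the deformed Fourier matrix `H = F_M ⊗_Q F_N` is
`Q^H_{(i,a)(j,b),(k,c)(l,d)} = δ_{a−b,c−d}·R^{i+l−k−j}_{ab,cd}`. -/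
theorem profile_defFourier (M N : ℕ) [NeZero M] [NeZero N]
    (Q : Matrix (ZMod M) (ZMod N) ℂ) (hQ : ∀ i a, ‖Q i a‖ = 1)
    (i j k l : ZMod M) (a b c d : ZMod N) :
    profile (defFourier M N Q) (i, a) (j, b) (k, c) (l, d) =
      (if a - b = c - d then 1 else 0) * Rmat M N Q (i + l - k - j) a b c d := by
  classical
  simp only [profile, defFourier, Rmat]
  simp only [exp_eq_char]
  have key : ∀ (m : ZMod M) (n : ZMod N),
      (Q m a * ZMod.stdAddChar (m * i) * ZMod.stdAddChar (n * a)) *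
      (Q m d * ZMod.stdAddChar (m * l) * ZMod.stdAddChar (n * d)) *
      conj ((Q m b * ZMod.stdAddChar (m * j) * ZMod.stdAddChar (n * b)) *
        (Q m c * ZMod.stdAddChar (m * k) * ZMod.stdAddChar (n * c))) =
      (ZMod.stdAddChar (m * (i + l - k - j)) * Q m a * Q m d * conj (Q m c * Q m b)) *
        ZMod.stdAddChar (n * (a + d - b - c)) := by
    intro m n
    have hM : m * (i + l - k - j) = m * i + m * l + -(m * k) + -(m * j) := by ring
    have hN : n * (a + d - b - c) = n * a + n * d + -(n * b) + -(n * c) := by ring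
    simp only [_root_.map_mul, conj_char, hM, hN, AddChar.map_add_eq_mul]
    ring
  rw [Fintype.sum_prod_type]
  simp only [key]
  rw [← Finset.sum_mul_sum]
  have horth : (∑ n : ZMod N, (ZMod.stdAddChar (n * (a + d - b - c)) : ℂ)) =
      if (a + d - b - c) = 0 then (Fintype.card (ZMod N) : ℂ) else 0 := by
    exact_mod_cast AddChar.sum_mulShift _ (ZMod.isPrimitive_stdAddChar N)
  rw [horth, ZMod.card]
  have hiff : (a + d - b - c = 0) ↔ (a - b = c - d) := by
    constructor <;> intro h <;> linear_combination h
  have hcard : (Fintype.card (ZMod M × ZMod N) : ℂ) = (M : ℂ) * N := by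
    simp [ZMod.card]
  rw [hcard]
  have hM0 : (M : ℂ) ≠ 0 := Nat.cast_ne_zero.mpr (NeZero.ne M)
  have hN0 : (N : ℂ) ≠ 0 := Nat.cast_ne_zero.mpr (NeZero.ne N)
  split_ifs with h1 h2 h2
  · field_simp
  · exact absurd (hiff.mp h1) h2
  · exact absurd (hiff.mpr h2) h1
  · simp
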